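/- Let M ∈ ℕ, E = EuclideanSpace ℝ (Fin M), (Ω, ℱ, μ) a probability space, g : Ω → E Bochner integrable, W : E → ℝ continuously differentiable, and c(u, v) = W(v) − W(u) + ⟨∇W(u), u − v⟩. Let Ξ ⊆ E be a closed set and a : Ω → E strongly measurable with: (i) a(ω) ∈ Ξ for all ω; (ii) a is a version of the conditional expectation μ[g | σ(a)], where σ(a) is the σ-algebra generated by a; (iii) c(a(ω), g(ω)) ≤ c(b', g(ω)) for all ω ∈ Ω and all b' ∈ Ξ; (iv) for every y in the closure of the convex hull of the range of g, and every δ > 0, there exists b' ∈ Ξ with c(b', y) ≤ δ. Let b : Ω → E be strongly measurable with b a version of μ[g | σ(b)] and b(ω) in the closure of the convex hull of the range of g for μ-a.e. ω. Assume W∘g, W∘a, W∘b, ω ↦ ⟨∇W(a(ω)), g(ω)⟩, ω ↦ ⟨∇W(b(ω)), g(ω)⟩, ω ↦ ⟨∇W(a(ω)), a(ω)⟩ and ω ↦ ⟨∇W(b(ω)), b(ω)⟩ are μ-integrable. Then ∫ c(a(ω), g(ω)) dμ(ω) ≤ ∫ c(b(ω), g(ω)) dμ(ω). -/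

import Mathlib

open MeasureTheory
open scoped RealInnerProductSpace

lemma condexp_clm_aux {Ω : Type*} {m m0 : MeasurableSpace Ω} (hm : m ≤ m0) (μ : Measure Ω)
    [IsFiniteMeasure μ]
    {E F : Type*} [NormedAddCommGroup E] [NormedSpace ℝ E] [CompleteSpace E]
    [NormedAddCommGroup F] [NormedSpace ℝ F] [CompleteSpace F]
    (L : E →L[ℝ] F) {g : Ω → E} (hg : Integrable g μ) :
    (fun ω => L ((μ[g | m]) ω)) =ᵐ[μ] μ[fun ω => L (g ω) | m] := by
  refine ae_eq_condExp_of_forall_setIntegral_eq hm (L.integrable_comp hg) ?_ ?_ ?_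
  · intro s _ _
    exact (L.integrable_comp integrable_condExp).integrableOn
  · intro s hs _
    rw [L.integral_comp_comm integrable_condExp.integrableOn,
        L.integral_comp_comm hg.integrableOn, setIntegral_condExp hm hg hs]
  · exact (L.continuous.comp_stronglyMeasurable stronglyMeasurable_condExp).aestronglyMeasurable

lemma euclidean_abs_coord_le_norm {M : ℕ} (x : EuclideanSpace ℝ (Fin M)) (i : Fin M) :
    |x i| ≤ ‖x‖ := by
  have h := abs_real_inner_le_norm (EuclideanSpace.single i (1 : ℝ)) x
  simpa [EuclideanSpace.inner_single_left, EuclideanSpace.norm_single] using h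

lemma real_inner_euclidean_eq_sum {M : ℕ} (x y : EuclideanSpace ℝ (Fin M)) :
    ⟪x, y⟫ = ∑ i, x i * y i := by
  simp [PiLp.inner_apply, RCLike.inner_apply]
  exact Finset.sum_congr rfl fun i _ => mul_comm _ _

lemma integral_inner_eq_of_condexp {M : ℕ} {Ω : Type*} {m m0 : MeasurableSpace Ω}
    (hm : m ≤ m0) (μ : Measure Ω) [IsFiniteMeasure μ]
    {g b F : Ω → EuclideanSpace ℝ (Fin M)}
    (hg : Integrable g μ) (hb : b =ᵐ[μ] μ[g | m])
    (hF : StronglyMeasurable[m] F)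
    (h1 : Integrable (fun ω => ⟪F ω, g ω⟫) μ)
    (h2 : Integrable (fun ω => ⟪F ω, b ω⟫) μ) :
    ∫ ω, ⟪F ω, g ω⟫ ∂μ = ∫ ω, ⟪F ω, b ω⟫ ∂μ := by
  have hbint : Integrable b μ := integrable_condExp.congr hb.symm
  set S : ℕ → Set Ω := fun n => {ω | ‖F ω‖ ≤ (n : ℝ)} with hS
  have hSmeas : ∀ n, MeasurableSet[m] (S n) := fun n => hF.norm.measurable measurableSet_Iic
  -- coordinate integrability
  have hgi : ∀ i, Integrable (fun ω => g ω i) μ :=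
    fun i => (EuclideanSpace.proj i : EuclideanSpace ℝ (Fin M) →L[ℝ] ℝ).integrable_comp hg
  have hbi : ∀ i, Integrable (fun ω => b ω i) μ :=
    fun i => (EuclideanSpace.proj i : EuclideanSpace ℝ (Fin M) →L[ℝ] ℝ).integrable_comp hbint
  -- coordinate conditional expectation
  have hcoord : ∀ i, (μ[fun ω => g ω i | m]) =ᵐ[μ] fun ω => b ω i := by
    intro i
    have h1'' : (fun ω => ((μ[g | m]) ω) i) =ᵐ[μ] μ[fun ω => g ω i | m] := by
      simpa using condexp_clm_aux hm μ
        (EuclideanSpace.proj i : EuclideanSpace ℝ (Fin M) →L[ℝ] ℝ) hg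
    have h2' : (fun ω => b ω i) =ᵐ[μ] fun ω => ((μ[g | m]) ω) i := by
      filter_upwards [hb] with ω hω using by rw [hω]
    exact (h2'.trans h1'').symm
  -- key truncated identity
  have key : ∀ n : ℕ, ∫ ω, (S n).indicator (fun ω => ⟪F ω, g ω⟫) ω ∂μ
      = ∫ ω, (S n).indicator (fun ω => ⟪F ω, b ω⟫) ω ∂μ := by
    intro n
    have hFi : ∀ i, StronglyMeasurable[m] ((S n).indicator (fun ω => F ω i)) :=
      fun i => (((EuclideanSpace.proj i :
        EuclideanSpace ℝ (Fin M) →L[ℝ] ℝ).continuous.comp_stronglyMeasurable hF)).indicator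
        (hSmeas n)
    have hbd : ∀ i, ∀ ω, ‖(S n).indicator (fun ω => F ω i) ω‖ ≤ (n : ℝ) := by
      intro i ω
      by_cases hω : ω ∈ S n
      · rw [Set.indicator_of_mem hω]
        exact le_trans (euclidean_abs_coord_le_norm (F ω) i) hω
      · rw [Set.indicator_of_notMem hω]
        simp
    have hrw : ∀ (h : Ω → EuclideanSpace ℝ (Fin M)), ∀ ω,
        (S n).indicator (fun ω => ⟪F ω, h ω⟫) ω
          = ∑ i, (S n).indicator (fun ω => F ω i) ω * h ω i := by
      intro h ω
      by_cases hω : ω ∈ S n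
      · simp [Set.indicator_of_mem hω, real_inner_euclidean_eq_sum]
      · simp [Set.indicator_of_notMem hω]
    have hintg : ∀ i, Integrable (fun ω => (S n).indicator (fun ω => F ω i) ω * g ω i) μ :=
      fun i => (hgi i).bdd_mul (((hFi i).mono hm).aestronglyMeasurable)
        (Filter.Eventually.of_forall (hbd i))
    have hintb : ∀ i, Integrable (fun ω => (S n).indicator (fun ω => F ω i) ω * b ω i) μ :=
      fun i => (hbi i).bdd_mul (((hFi i).mono hm).aestronglyMeasurable)
        (Filter.Eventually.of_forall (hbd i))
    have coordeq : ∀ i, ∫ ω, (S n).indicator (fun ω => F ω i) ω * g ω i ∂μ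
        = ∫ ω, (S n).indicator (fun ω => F ω i) ω * b ω i ∂μ := by
      intro i
      have hmul := condExp_stronglyMeasurable_mul_of_bound hm (hFi i) (hgi i) n
        (Filter.Eventually.of_forall (hbd i))
      calc ∫ ω, (S n).indicator (fun ω => F ω i) ω * g ω i ∂μ
          = ∫ ω, (μ[((S n).indicator (fun ω => F ω i)) * (fun ω => g ω i) | m]) ω ∂μ :=
            (integral_condExp hm).symm
        _ = ∫ ω, (S n).indicator (fun ω => F ω i) ω * b ω i ∂μ := by
            refine integral_congr_ae ?_
            filter_upwards [hmul, hcoord i] with ω h1ω h2ω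
            rw [h1ω, Pi.mul_apply, h2ω]
    calc ∫ ω, (S n).indicator (fun ω => ⟪F ω, g ω⟫) ω ∂μ
        = ∫ ω, ∑ i, (S n).indicator (fun ω => F ω i) ω * g ω i ∂μ := by
          refine integral_congr_ae (Filter.Eventually.of_forall fun ω => hrw g ω)
      _ = ∑ i, ∫ ω, (S n).indicator (fun ω => F ω i) ω * g ω i ∂μ :=
          integral_finset_sum _ (fun i _ => hintg i)
      _ = ∑ i, ∫ ω, (S n).indicator (fun ω => F ω i) ω * b ω i ∂μ := by
          exact Finset.sum_congr rfl (fun i _ => coordeq i)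
      _ = ∫ ω, ∑ i, (S n).indicator (fun ω => F ω i) ω * b ω i ∂μ :=
          (integral_finset_sum _ (fun i _ => hintb i)).symm
      _ = ∫ ω, (S n).indicator (fun ω => ⟪F ω, b ω⟫) ω ∂μ := by
          refine integral_congr_ae (Filter.Eventually.of_forall fun ω => (hrw b ω).symm)
  -- dominated convergence on both sides
  have hmemS : ∀ ω : Ω, ∀ n : ℕ, ⌈‖F ω‖⌉₊ ≤ n → ω ∈ S n := by
    intro ω n hn
    have : ‖F ω‖ ≤ (n : ℝ) := le_trans (Nat.le_ceil _) (by exact_mod_cast hn)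
    rw [hS]
    exact this
  have tend : ∀ (h : Ω → EuclideanSpace ℝ (Fin M)), Integrable (fun ω => ⟪F ω, h ω⟫) μ →
      Filter.Tendsto (fun n => ∫ ω, (S n).indicator (fun ω => ⟪F ω, h ω⟫) ω ∂μ)
        Filter.atTop (nhds (∫ ω, ⟪F ω, h ω⟫ ∂μ)) := by
    intro h hint
    refine tendsto_integral_of_dominated_convergence (fun ω => ‖⟪F ω, h ω⟫‖)
      (fun n => hint.1.indicator (hm _ (hSmeas n))) hint.norm ?_ ?_
    · intro n
      exact Filter.Eventually.of_forall fun ω => norm_indicator_le_norm_self _ _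
    · refine Filter.Eventually.of_forall fun ω => ?_
      refine Filter.Tendsto.congr' ?_ tendsto_const_nhds
      filter_upwards [Filter.eventually_atTop.mpr ⟨⌈‖F ω‖⌉₊, fun n hn => hmemS ω n hn⟩] with n hn
      exact (Set.indicator_of_mem hn (fun ω => ⟪F ω, h ω⟫)).symm
  have t1 := tend g h1
  have t2 := tend b h2
  rw [funext fun n => key n] at t1
  exact tendsto_nhds_unique t1 t2

/-- Sufficiency in moment persuasion: a feasible policy `a` (a martingale version of the
conditional expectation of `g` given `σ(a)`) whose values pointwise minimize the Bregman
cost `c` over a `conv(g(Ω))`-maximal support set `Ξ` has expected cost no greater than any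
other feasible policy `b`. -/
theorem moment_persuasion_sufficiency
    {M : ℕ} {Ω : Type*} [MeasurableSpace Ω]
    (μ : Measure Ω) [IsProbabilityMeasure μ]
    (g : Ω → EuclideanSpace ℝ (Fin M)) (hg : Integrable g μ)
    (W : EuclideanSpace ℝ (Fin M) → ℝ) (hW : ContDiff ℝ 1 W)
    (c : EuclideanSpace ℝ (Fin M) → EuclideanSpace ℝ (Fin M) → ℝ)
    (hc : ∀ u v, c u v = W v - W u + ⟪gradient W u, u - v⟫)
    (Ξ : Set (EuclideanSpace ℝ (Fin M))) (hΞ : IsClosed Ξ)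
    (a : Ω → EuclideanSpace ℝ (Fin M)) (hameas : StronglyMeasurable a)
    (hamem : ∀ ω, a ω ∈ Ξ)
    (hacond : a =ᵐ[μ] μ[g | MeasurableSpace.comap a (by infer_instance)])
    (hamin : ∀ ω, ∀ b' ∈ Ξ, c (a ω) (g ω) ≤ c b' (g ω))
    (hmaximal : ∀ y ∈ closure (convexHull ℝ (Set.range g)), ∀ δ : ℝ, 0 < δ →
      ∃ b' ∈ Ξ, c b' y ≤ δ)
    (b : Ω → EuclideanSpace ℝ (Fin M)) (hbmeas : StronglyMeasurable b)
    (hbcond : b =ᵐ[μ] μ[g | MeasurableSpace.comap b (by infer_instance)])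
    (hbmem : ∀ᵐ ω ∂μ, b ω ∈ closure (convexHull ℝ (Set.range g)))
    (hint1 : Integrable (fun ω => W (g ω)) μ)
    (hint2 : Integrable (fun ω => W (a ω)) μ)
    (hint3 : Integrable (fun ω => W (b ω)) μ)
    (hint4 : Integrable (fun ω => ⟪gradient W (a ω), g ω⟫) μ)
    (hint5 : Integrable (fun ω => ⟪gradient W (b ω), g ω⟫) μ)
    (hint6 : Integrable (fun ω => ⟪gradient W (a ω), a ω⟫) μ)
    (hint7 : Integrable (fun ω => ⟪gradient W (b ω), b ω⟫) μ) :
    ∫ ω, c (a ω) (g ω) ∂μ ≤ ∫ ω, c (b ω) (g ω) ∂μ := by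
  classical
  -- continuity facts
  have hgrad_cont : Continuous (gradient W) := by
    have hgr : gradient W = fun x =>
        (InnerProductSpace.toDual ℝ (EuclideanSpace ℝ (Fin M))).symm (fderiv ℝ W x) := rfl
    rw [hgr]
    exact (InnerProductSpace.toDual ℝ _).symm.continuous.comp (hW.continuous_fderiv one_ne_zero)
  have hccont : ∀ y, Continuous fun u => c u y := by
    intro y
    have : (fun u => c u y) = fun u => W y - W u + ⟪gradient W u, u - y⟫ :=
      funext fun u => hc u y
    rw [this]
    exact ((continuous_const.sub (hW.continuous)).add
      (hgrad_cont.inner (continuous_id.sub continuous_const)))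
  -- sigma-algebra generated by b
  have hm : MeasurableSpace.comap b inferInstance ≤ (by infer_instance : MeasurableSpace Ω) :=
    hbmeas.measurable.comap_le
  set m : MeasurableSpace Ω := MeasurableSpace.comap b inferInstance with hm_def
  have hbm : StronglyMeasurable[m] b := (Measurable.of_comap_le le_rfl).stronglyMeasurable
  have hbcond' : b =ᵐ[μ] μ[g | m] := hbcond
  have hbint : Integrable b μ := integrable_condExp.congr hbcond'.symm
  -- cost decompositions
  have hCA : (fun ω => c (a ω) (g ω)) = fun ω =>
      W (g ω) - W (a ω) + (⟪gradient W (a ω), a ω⟫ - ⟪gradient W (a ω), g ω⟫) := by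
    funext ω; rw [hc, inner_sub_right]
  have hCAint : Integrable (fun ω => c (a ω) (g ω)) μ := by
    rw [hCA]; exact (hint1.sub hint2).add (hint6.sub hint4)
  have hCB : (fun ω => c (b ω) (g ω)) = fun ω =>
      W (g ω) - W (b ω) + (⟪gradient W (b ω), b ω⟫ - ⟪gradient W (b ω), g ω⟫) := by
    funext ω; rw [hc, inner_sub_right]
  -- martingale term for b vanishes
  have hFb : StronglyMeasurable[m] fun ω => gradient W (b ω) :=
    hgrad_cont.comp_stronglyMeasurable hbm
  have hzero : ∫ ω, ⟪gradient W (b ω), g ω⟫ ∂μ = ∫ ω, ⟪gradient W (b ω), b ω⟫ ∂μ :=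
    integral_inner_eq_of_condexp hm μ hg hbcond' hFb hint5 hint7
  have hRHS : ∫ ω, c (b ω) (g ω) ∂μ = ∫ ω, W (g ω) ∂μ - ∫ ω, W (b ω) ∂μ := by
    have h1 := integral_add (μ := μ) (hint1.sub hint3) (hint7.sub hint5)
    simp only [Pi.sub_apply] at h1
    rw [hCB, h1, integral_sub hint1 hint3, integral_sub hint7 hint5, hzero]
    ring
  -- countable dense subset of Ξ
  obtain ⟨s, hsc, hsd⟩ := TopologicalSpace.exists_countable_dense (↥Ξ)
  set D : Set (EuclideanSpace ℝ (Fin M)) := Subtype.val '' s with hD_def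
  have hDsub : D ⊆ Ξ := by rintro x ⟨y, _, rfl⟩; exact y.2
  have hDc : D.Countable := hsc.image _
  have hDdense : ∀ x ∈ Ξ, ∀ r : ℝ, 0 < r → ∃ d ∈ D, dist d x < r := by
    intro x hx r hr
    obtain ⟨y, hy1, hy2⟩ := Metric.dense_iff.mp hsd ⟨x, hx⟩ r hr
    refine ⟨(y : EuclideanSpace ℝ (Fin M)), ⟨y, hy2, rfl⟩, ?_⟩
    have hlt := Metric.mem_ball.mp hy1
    rw [Subtype.dist_eq] at hlt
    simpa [dist_comm] using hlt
  -- per-point conditional inequality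
  have hper : ∀ d ∈ Ξ, ∀ᵐ ω ∂μ, (μ[fun ω => c (a ω) (g ω) | m]) ω ≤
      (μ[fun ω => W (g ω) | m]) ω + (c d (b ω) - W (b ω)) := by
    intro d hd
    set v := gradient W d with hv
    set k : ℝ := ⟪v, d⟫ - W d with hk
    have hCBd : (fun ω => c d (g ω)) =
        ((fun ω => W (g ω)) + fun _ => k) - fun ω => ⟪v, g ω⟫ := by
      funext ω
      simp only [Pi.sub_apply, Pi.add_apply, hk]
      rw [hc, inner_sub_right]; ring
    have hint_inner : Integrable (fun ω => ⟪v, g ω⟫) μ :=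
      (innerSL ℝ v).integrable_comp hg
    have hCBdint : Integrable (fun ω => c d (g ω)) μ := by
      rw [hCBd]; exact (hint1.add (integrable_const k)).sub hint_inner
    have hmono := condExp_mono (m := m) hCAint hCBdint
      (Filter.Eventually.of_forall fun ω => hamin ω d hd)
    have hcondinner : (μ[fun ω => ⟪v, g ω⟫ | m]) =ᵐ[μ] fun ω => ⟪v, b ω⟫ := by
      have h1'' : (fun ω => ⟪v, (μ[g | m]) ω⟫) =ᵐ[μ] μ[fun ω => ⟪v, g ω⟫ | m] := by
        simpa using condexp_clm_aux hm μ (innerSL ℝ v) hg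
      have h2' : (fun ω => ⟪v, b ω⟫) =ᵐ[μ] fun ω => ⟪v, (μ[g | m]) ω⟫ := by
        filter_upwards [hbcond'] with ω hω using by rw [hω]
      exact (h2'.trans h1'').symm
    have hsplit : (μ[fun ω => c d (g ω) | m]) =ᵐ[μ]
        fun ω => ((μ[fun ω => W (g ω) | m]) ω + k) - ⟪v, b ω⟫ := by
      rw [hCBd]
      have e1 := condExp_sub (μ := μ) (m := m)
        (f := (fun ω => W (g ω)) + fun _ => k) (g := fun ω => ⟪v, g ω⟫)
        (hint1.add (integrable_const k)) hint_inner
      have e2 := condExp_add (μ := μ) (m := m)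
        (f := fun ω => W (g ω)) (g := fun _ => k) hint1 (integrable_const k)
      filter_upwards [e1, e2, hcondinner] with ω h1ω h2ω h3ω
      rw [h1ω, Pi.sub_apply, h2ω, Pi.add_apply, condExp_const hm, h3ω]
    filter_upwards [hmono, hsplit] with ω h1ω h2ω
    have : c d (b ω) - W (b ω) = k - ⟪v, b ω⟫ := by
      rw [hc, inner_sub_right, hk]; ring
    rw [this]
    have := le_trans h1ω (le_of_eq h2ω)
    linarith
  have hae : ∀ᵐ ω ∂μ, ∀ d ∈ D, (μ[fun ω => c (a ω) (g ω) | m]) ω ≤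
      (μ[fun ω => W (g ω) | m]) ω + (c d (b ω) - W (b ω)) :=
    (ae_ball_iff hDc).mpr fun d hd => hper d (hDsub hd)
  -- key a.e. inequality
  have hkey : ∀ᵐ ω ∂μ, (μ[fun ω => c (a ω) (g ω) | m]) ω ≤
      (fun ω => (μ[fun ω => W (g ω) | m]) ω - W (b ω)) ω := by
    filter_upwards [hae, hbmem] with ω h1ω h2ω
    refine le_of_forall_pos_le_add ?_
    intro δ hδ
    obtain ⟨b'', hb''Ξ, hb''c⟩ := hmaximal (b ω) h2ω (δ / 2) (by linarith)
    have hcont := (hccont (b ω)).continuousAt (x := b'')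
    rw [Metric.continuousAt_iff] at hcont
    obtain ⟨r, hr, hball⟩ := hcont (δ / 2) (by linarith)
    obtain ⟨d, hdD, hdist⟩ := hDdense b'' hb''Ξ r hr
    have hcd : c d (b ω) ≤ δ := by
      have h := hball hdist
      rw [Real.dist_eq] at h
      have := abs_lt.mp h
      linarith [this.1, this.2]
    have := h1ω d hdD
    linarith
  -- integrate
  have hGint : Integrable (fun ω => (μ[fun ω => W (g ω) | m]) ω - W (b ω)) μ :=
    integrable_condExp.sub hint3
  calc ∫ ω, c (a ω) (g ω) ∂μ
      = ∫ ω, (μ[fun ω => c (a ω) (g ω) | m]) ω ∂μ := (integral_condExp hm).symm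
    _ ≤ ∫ ω, ((μ[fun ω => W (g ω) | m]) ω - W (b ω)) ∂μ :=
        integral_mono_ae integrable_condExp hGint hkey
    _ = ∫ ω, (μ[fun ω => W (g ω) | m]) ω ∂μ - ∫ ω, W (b ω) ∂μ :=
        integral_sub integrable_condExp hint3
    _ = ∫ ω, W (g ω) ∂μ - ∫ ω, W (b ω) ∂μ := by rw [integral_condExp hm]
    _ = ∫ ω, c (b ω) (g ω) ∂μ := hRHS.symm
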